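/- arXiv:2407.06575 — 3 statements merged into one kernel-verified Lean document; each statement's English description precedes it below -/
import Mathlib

section
/- Let p ≥ 1 and let f ∈ L^p_loc(ℝⁿ; ℝ^m) satisfy the Morrey-type condition with constants (L, p, δ, r₀). Let η : ℝⁿ → [0,∞) be integrable with ∫_{ℝⁿ} η = 1. Then for every ε > 0 the mollification f ∗ η_ε satisfies the same Morrey-type condition with the same constants: for every x₀ ∈ ℝⁿ and every 0 < r < r₀, ∫_{B(x₀,r)} |f ∗ η_ε|^p dx ≤ L r^{n−p+δ}. -/
open MeasureTheory Metric ENNReal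

/-- Weighted Jensen inequality for `rpow` in `ℝ≥0∞`. -/
theorem weighted_jensen_rpow {α : Type*} [MeasurableSpace α] {μ : Measure α} {p : ℝ}
    (hp : 1 ≤ p) (w g : α → ℝ≥0∞) (hw : AEMeasurable w μ) (hg : AEMeasurable g μ)
    (hw1 : ∫⁻ a, w a ∂μ = 1) :
    (∫⁻ a, w a * g a ∂μ) ^ p ≤ ∫⁻ a, w a * g a ^ p ∂μ := by
  have hp0 : 0 < p := lt_of_lt_of_le one_pos hp
  rcases eq_or_lt_of_le hp with h1 | h1
  · simp [← h1]
  · have hpq : p.HolderConjugate (p.conjExponent) := Real.HolderConjugate.conjExponent h1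
    set q := p.conjExponent with hq
    have hq0 : 0 < q := hpq.symm.pos
    have key := ENNReal.lintegral_mul_le_Lp_mul_Lq μ hpq
      (((hw.pow_const (1/p)).mul hg)) (hw.pow_const (1/q))
    have e1 : ∀ a, (w a ^ (1/p) * g a) * (w a ^ (1/q)) = w a * g a := by
      intro a
      rw [mul_comm, ← mul_assoc, ← ENNReal.rpow_add_of_nonneg _ _ (by positivity) (by positivity)]
      rw [one_div, one_div, hpq.symm.inv_add_inv_eq_one, ENNReal.rpow_one]
    have e2 : ∀ a, (w a ^ (1/p) * g a) ^ p = w a * g a ^ p := by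
      intro a
      rw [ENNReal.mul_rpow_of_nonneg _ _ hp0.le, ← ENNReal.rpow_mul,
        one_div, inv_mul_cancel₀ hp0.ne', ENNReal.rpow_one]
    have e3 : ∀ a, (w a ^ (1/q)) ^ q = w a := by
      intro a
      rw [← ENNReal.rpow_mul, one_div, inv_mul_cancel₀ hq0.ne', ENNReal.rpow_one]
    simp only [Pi.mul_apply, e1, e2, e3] at key
    rw [hw1, ENNReal.one_rpow, mul_one] at key
    calc (∫⁻ a, w a * g a ∂μ) ^ p ≤ ((∫⁻ a, w a * g a ^ p ∂μ) ^ (1/p)) ^ p :=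
          ENNReal.rpow_le_rpow key hp0.le
      _ = ∫⁻ a, w a * g a ^ p ∂μ := by
          rw [← ENNReal.rpow_mul, one_div, inv_mul_cancel₀ hp0.ne', ENNReal.rpow_one]

/-- Mollification preserves the Morrey-type condition with the same constants
(step (b) of the mollification scheme, Lemma 3.2 of the paper). -/
theorem stmt1 (n m : ℕ) (hn : 1 ≤ n) (p L δ r₀ : ℝ) (hp : 1 ≤ p) (hL : 0 < L)
    (hδ : 0 < δ) (hr₀ : 0 < r₀)
    (f : EuclideanSpace ℝ (Fin n) → EuclideanSpace ℝ (Fin m))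
    (hmeas : AEStronglyMeasurable f volume)
    (hLploc : ∀ (x₀ : EuclideanSpace ℝ (Fin n)) (R : ℝ),
      (∫⁻ x in Metric.ball x₀ R, ENNReal.ofReal (‖f x‖ ^ p)) < ⊤)
    (hMorrey : ∀ (x₀ : EuclideanSpace ℝ (Fin n)) (r : ℝ), 0 < r → r < r₀ →
      (∫⁻ x in Metric.ball x₀ r, ENNReal.ofReal (‖f x‖ ^ p)) ≤
        ENNReal.ofReal (L * r ^ ((n : ℝ) - p + δ)))
    (η : EuclideanSpace ℝ (Fin n) → ℝ)
    (hηint : Integrable η) (hηnn : ∀ y, 0 ≤ η y) (hηone : (∫ y, η y) = 1)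
    (ε : ℝ) (hε : 0 < ε) :
    ∀ (x₀ : EuclideanSpace ℝ (Fin n)) (r : ℝ), 0 < r → r < r₀ →
      (∫⁻ x in Metric.ball x₀ r,
          ENNReal.ofReal (‖∫ y, ((ε ^ n)⁻¹ * η (ε⁻¹ • y)) • f (x - y)‖ ^ p)) ≤
        ENNReal.ofReal (L * r ^ ((n : ℝ) - p + δ)) := by
  intro x₀ r hr hrr₀
  have hp0 : 0 < p := lt_of_lt_of_le one_pos hp
  have hεn : (0:ℝ) < ε ^ n := pow_pos hε n
  -- the mollifier
  have hηε_nn : ∀ y : EuclideanSpace ℝ (Fin n), 0 ≤ (ε ^ n)⁻¹ * η (ε⁻¹ • y) :=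
    fun y => mul_nonneg (inv_nonneg.2 hεn.le) (hηnn _)
  have hηε_int : Integrable (fun y : EuclideanSpace ℝ (Fin n) => (ε ^ n)⁻¹ * η (ε⁻¹ • y)) :=
    ((integrable_comp_smul_iff volume η (inv_ne_zero hε.ne')).mpr hηint).const_mul _
  have hηε_one : (∫ y : EuclideanSpace ℝ (Fin n), (ε ^ n)⁻¹ * η (ε⁻¹ • y)) = 1 := by
    rw [integral_const_mul, Measure.integral_comp_smul volume η ε⁻¹, hηone]
    rw [finrank_euclideanSpace_fin, smul_eq_mul, mul_one, inv_pow, inv_inv,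
      abs_of_pos hεn, inv_mul_cancel₀ hεn.ne']
  set w : EuclideanSpace ℝ (Fin n) → ℝ≥0∞ :=
    fun y => ENNReal.ofReal ((ε ^ n)⁻¹ * η (ε⁻¹ • y)) with hw
  have hw_meas : AEMeasurable w volume := hηε_int.aemeasurable.ennreal_ofReal
  have hw_one : (∫⁻ y, w y) = 1 := by
    have h := ofReal_integral_eq_lintegral_ofReal hηε_int (ae_of_all _ hηε_nn)
    rw [hηε_one, ENNReal.ofReal_one] at h
    exact h.symm
  set g' : EuclideanSpace ℝ (Fin n) → ℝ≥0∞ := fun x => ENNReal.ofReal (‖f x‖ ^ p) with hg'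
  have hg'_meas : AEMeasurable g' volume :=
    ((hmeas.norm.aemeasurable).pow_const p).ennreal_ofReal
  set C := ENNReal.ofReal (L * r ^ ((n : ℝ) - p + δ)) with hC
  -- pointwise Jensen
  have hpt : ∀ x : EuclideanSpace ℝ (Fin n),
      ENNReal.ofReal (‖∫ y, ((ε ^ n)⁻¹ * η (ε⁻¹ • y)) • f (x - y)‖ ^ p)
      ≤ ∫⁻ y, w y * g' (x - y) := by
    intro x
    set g : EuclideanSpace ℝ (Fin n) → ℝ≥0∞ := fun y => ENNReal.ofReal ‖f (x - y)‖ with hg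
    have hsub : MeasurePreserving (fun y : EuclideanSpace ℝ (Fin n) => x - y) volume volume :=
      Measure.measurePreserving_sub_left volume x
    have hg_meas : AEMeasurable g volume :=
      (hmeas.norm.aemeasurable.comp_quasiMeasurePreserving
        hsub.quasiMeasurePreserving).ennreal_ofReal
    have hA : ENNReal.ofReal ‖∫ y, ((ε ^ n)⁻¹ * η (ε⁻¹ • y)) • f (x - y)‖
        ≤ ∫⁻ y, w y * g y := by
      by_cases hi : Integrable
          (fun y : EuclideanSpace ℝ (Fin n) => ((ε ^ n)⁻¹ * η (ε⁻¹ • y)) • f (x - y)) volume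
      · refine le_trans (ENNReal.ofReal_le_ofReal (norm_integral_le_integral_norm _)) ?_
        rw [ofReal_integral_eq_lintegral_ofReal hi.norm (ae_of_all _ fun y => norm_nonneg _)]
        refine le_of_eq (lintegral_congr fun y => ?_)
        rw [norm_smul, Real.norm_eq_abs, abs_of_nonneg (hηε_nn y),
          ENNReal.ofReal_mul (hηε_nn y)]
      · rw [integral_undef hi]
        simp
    calc ENNReal.ofReal (‖∫ y, ((ε ^ n)⁻¹ * η (ε⁻¹ • y)) • f (x - y)‖ ^ p)
        = (ENNReal.ofReal ‖∫ y, ((ε ^ n)⁻¹ * η (ε⁻¹ • y)) • f (x - y)‖) ^ p :=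
          (ENNReal.ofReal_rpow_of_nonneg (norm_nonneg _) hp0.le).symm
      _ ≤ (∫⁻ y, w y * g y) ^ p := ENNReal.rpow_le_rpow hA hp0.le
      _ ≤ ∫⁻ y, w y * g y ^ p := weighted_jensen_rpow hp w g hw_meas hg_meas hw_one
      _ = ∫⁻ y, w y * g' (x - y) := by
          refine lintegral_congr fun y => ?_
          simp only [hg, hg']
          rw [ENNReal.ofReal_rpow_of_nonneg (norm_nonneg _) hp0.le]
  -- measurability for Tonelli
  have qmp1 : Measure.QuasiMeasurePreserving
      (fun z : EuclideanSpace ℝ (Fin n) × EuclideanSpace ℝ (Fin n) => z.1 - z.2)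
      ((volume : Measure (EuclideanSpace ℝ (Fin n))).prod volume) volume := by
    have := (Measure.quasiMeasurePreserving_fst
        (μ := (volume : Measure (EuclideanSpace ℝ (Fin n))))
        (ν := (volume : Measure (EuclideanSpace ℝ (Fin n))))).comp
      (measurePreserving_sub_prod (volume : Measure (EuclideanSpace ℝ (Fin n)))
        volume).quasiMeasurePreserving
    exact this
  have hac : ((volume : Measure (EuclideanSpace ℝ (Fin n))).restrict (ball x₀ r)).prod
      (volume : Measure (EuclideanSpace ℝ (Fin n)))
      ≪ (volume : Measure (EuclideanSpace ℝ (Fin n))).prod volume :=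
    Measure.AbsolutelyContinuous.prod
      (Measure.absolutelyContinuous_of_le Measure.restrict_le_self)
      (Measure.AbsolutelyContinuous.refl _)
  have hF : AEMeasurable
      (Function.uncurry fun x y : EuclideanSpace ℝ (Fin n) => w y * g' (x - y))
      (((volume : Measure (EuclideanSpace ℝ (Fin n))).restrict (ball x₀ r)).prod volume) := by
    refine AEMeasurable.mono_ac ?_ hac
    exact (hw_meas.comp_quasiMeasurePreserving Measure.quasiMeasurePreserving_snd).mul
      (hg'_meas.comp_quasiMeasurePreserving qmp1)
  -- translation bound
  have htrans : ∀ y : EuclideanSpace ℝ (Fin n), (∫⁻ x in ball x₀ r, g' (x - y)) ≤ C := by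
    intro y
    have hmp : MeasurePreserving (fun x : EuclideanSpace ℝ (Fin n) => x - y) volume volume :=
      measurePreserving_sub_right volume y
    have hemb : MeasurableEmbedding (fun x : EuclideanSpace ℝ (Fin n) => x - y) :=
      (MeasurableEquiv.subRight y).measurableEmbedding
    have hpre : (fun x : EuclideanSpace ℝ (Fin n) => x - y) ⁻¹' ball (x₀ - y) r = ball x₀ r := by
      ext z
      simp [mem_ball, dist_sub_right]
    have h := hmp.setLIntegral_comp_preimage_emb hemb g' (ball (x₀ - y) r)
    rw [hpre] at h
    rw [h]
    exact hMorrey (x₀ - y) r hr hrr₀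
  -- main chain
  calc ∫⁻ x in ball x₀ r, ENNReal.ofReal (‖∫ y, ((ε ^ n)⁻¹ * η (ε⁻¹ • y)) • f (x - y)‖ ^ p)
      ≤ ∫⁻ x in ball x₀ r, ∫⁻ y, w y * g' (x - y) := lintegral_mono fun x => hpt x
    _ = ∫⁻ y, ∫⁻ x in ball x₀ r, w y * g' (x - y) := lintegral_lintegral_swap hF
    _ = ∫⁻ y, w y * ∫⁻ x in ball x₀ r, g' (x - y) :=
        lintegral_congr fun y => lintegral_const_mul' _ _ ENNReal.ofReal_ne_top
    _ ≤ ∫⁻ y, w y * C := lintegral_mono fun y => mul_le_mul_right (htrans y) _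
    _ = ∫⁻ y, C * w y := lintegral_congr fun y => mul_comm _ _
    _ = C * ∫⁻ y, w y := lintegral_const_mul' _ _ ENNReal.ofReal_ne_top
    _ = C := by rw [hw_one, mul_one]
end

section
/- Let n ≥ 1, p ≥ 1, 0 < δ ≤ p, 0 < r₀ ≤ 1, L > 0, and let f : ℝⁿ → [0,∞) be measurable satisfying the Morrey-type condition with constants (L, p, δ, r₀). Then there is a constant C > 0 depending only on n, p, δ, L and r₀ such that for every x₀ ∈ ℝⁿ and every r ≥ r₀, ∫_{B(x₀,r)} √(f(x)² + 1) dx ≤ C e^{C r}. -/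
open MeasureTheory Metric

lemma covering_step' {n : ℕ} (g : EuclideanSpace ℝ (Fin n) → ENNReal) (hg : Measurable g)
    (x₀ : EuclideanSpace ℝ (Fin n)) (r ρ : ℝ) :
    volume (ball (0 : EuclideanSpace ℝ (Fin n)) ρ) * ∫⁻ x in ball x₀ r, g x ≤
      ∫⁻ y in ball x₀ (r + ρ), ∫⁻ x in ball y ρ, g x := by
  open Set in
  set B' : Set (EuclideanSpace ℝ (Fin n)) := ball x₀ (r + ρ) with hB'
  set S : Set (EuclideanSpace ℝ (Fin n) × EuclideanSpace ℝ (Fin n)) :=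
    (B' ×ˢ univ) ∩ {q | dist q.1 q.2 < ρ} with hS
  have hSmeas : MeasurableSet S := by
    apply (measurableSet_ball.prod MeasurableSet.univ).inter
    exact measurableSet_lt (by fun_prop) measurable_const
  set H : EuclideanSpace ℝ (Fin n) × EuclideanSpace ℝ (Fin n) → ENNReal :=
    S.indicator (fun q => g q.2) with hH
  have hHmeas : Measurable H := Measurable.indicator (by fun_prop) hSmeas
  have swap : ∫⁻ y, ∫⁻ x, H (y, x) = ∫⁻ x, ∫⁻ y, H (y, x) := by
    exact lintegral_lintegral_swap (hHmeas.aemeasurable)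
  -- left evaluation
  have left : ∫⁻ y, ∫⁻ x, H (y, x) = ∫⁻ y in B', ∫⁻ x in ball y ρ, g x := by
    rw [← lintegral_indicator measurableSet_ball]
    congr 1
    funext y
    by_cases hy : y ∈ B'
    · rw [indicator_of_mem hy, ← lintegral_indicator measurableSet_ball]
      congr 1; funext x
      by_cases hx : x ∈ ball y ρ
      · rw [indicator_of_mem hx, hH, indicator_of_mem]
        exact ⟨⟨hy, mem_univ _⟩, by simpa [dist_comm] using hx⟩
      · rw [indicator_of_notMem hx, hH, indicator_of_notMem]
        intro ⟨_, h2⟩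
        exact hx (by simpa [mem_ball, dist_comm] using h2)
    · rw [indicator_of_notMem hy]
      have : ∀ x, H (y, x) = 0 := by
        intro x
        rw [hH, indicator_of_notMem]
        intro ⟨⟨h1, _⟩, _⟩; exact hy h1
      simp [this]
  -- right evaluation
  have right : ∫⁻ x, ∫⁻ y, H (y, x) = ∫⁻ x, g x * volume (B' ∩ ball x ρ) := by
    congr 1; funext x
    have : (fun y => H (y, x)) = (B' ∩ ball x ρ).indicator (fun _ => g x) := by
      funext y
      by_cases hy : y ∈ B' ∩ ball x ρ
      · rw [indicator_of_mem hy, hH, indicator_of_mem]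
        exact ⟨⟨hy.1, mem_univ _⟩, by simpa [mem_ball] using hy.2⟩
      · rw [indicator_of_notMem hy, hH, indicator_of_notMem]
        intro ⟨⟨h1, _⟩, h2⟩
        exact hy ⟨h1, by simpa [mem_ball] using h2⟩
    rw [this, lintegral_indicator_const (measurableSet_ball.inter measurableSet_ball)]
  -- lower bound on right side
  have lower : volume (ball (0 : EuclideanSpace ℝ (Fin n)) ρ) * ∫⁻ x in ball x₀ r, g x ≤
      ∫⁻ x, g x * volume (B' ∩ ball x ρ) := by
    rw [← lintegral_const_mul _ hg]
    calc ∫⁻ x in ball x₀ r, volume (ball (0 : EuclideanSpace ℝ (Fin n)) ρ) * g x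
        ≤ ∫⁻ x in ball x₀ r, g x * volume (B' ∩ ball x ρ) := by
          apply setLIntegral_mono' measurableSet_ball
          intro x hx
          have hsub : ball x ρ ⊆ B' := by
            apply ball_subset_ball'
            have := mem_ball.mp hx
            linarith
          have hvol : volume (ball x ρ) = volume (ball (0 : EuclideanSpace ℝ (Fin n)) ρ) :=
            Measure.addHaar_ball_center _ _ _
          rw [inter_eq_right.mpr hsub, hvol, mul_comm]
      _ ≤ ∫⁻ x, g x * volume (B' ∩ ball x ρ) := setLIntegral_le_lintegral _ _
  calc volume (ball (0 : EuclideanSpace ℝ (Fin n)) ρ) * ∫⁻ x in ball x₀ r, g x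
      ≤ ∫⁻ x, g x * volume (B' ∩ ball x ρ) := lower
    _ = ∫⁻ x, ∫⁻ y, H (y, x) := right.symm
    _ = ∫⁻ y, ∫⁻ x, H (y, x) := swap.symm
    _ = ∫⁻ y in B', ∫⁻ x in ball y ρ, g x := left

lemma ptwise_bound' (a p : ℝ) (ha : 0 ≤ a) (hp : 1 ≤ p) :
    Real.sqrt (a ^ 2 + 1) ≤ a ^ p + 2 := by
  have h1 : Real.sqrt (a ^ 2 + 1) ≤ a + 1 := by
    rw [show a + 1 = Real.sqrt ((a + 1) ^ 2) from (Real.sqrt_sq (by linarith)).symm]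
    apply Real.sqrt_le_sqrt; nlinarith
  have h2 : a ≤ a ^ p + 1 := by
    rcases le_or_gt a 1 with h | h
    · have : (0:ℝ) ≤ a ^ p := Real.rpow_nonneg ha p
      linarith
    · have h3 : a ^ (1:ℝ) ≤ a ^ p := Real.rpow_le_rpow_of_exponent_le h.le hp
      rw [Real.rpow_one] at h3; linarith
  linarith

lemma real_ineq' (n : ℕ) (p δ L k ρ r : ℝ) (hρ : 0 < ρ) (hρr : ρ ≤ r) (hr0 : 0 < r)
    (hL : 0 < L) (hk : 0 < k) :
    (r + ρ) ^ n * k * (L * ρ ^ ((n:ℝ) - p + δ)) + 2 * (ρ ^ n * k) * (r ^ n * k)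
      ≤ (ρ ^ n * k) * ((2 ^ n * L * ρ ^ (δ - p) + 2 * k + n + 1) *
          Real.exp ((2 ^ n * L * ρ ^ (δ - p) + 2 * k + n + 1) * r)) := by
  set A : ℝ := 2 ^ n * L * ρ ^ (δ - p) + 2 * k with hA
  set C : ℝ := A + n + 1 with hC
  have hρδp : (0:ℝ) < ρ ^ (δ - p) := Real.rpow_pos_of_pos hρ _
  have hA0 : 0 < A := by positivity
  have hsplit : ρ ^ ((n:ℝ) - p + δ) = ρ ^ n * ρ ^ (δ - p) := by
    rw [show (n:ℝ) - p + δ = (n:ℝ) + (δ - p) by ring, Real.rpow_add hρ, Real.rpow_natCast]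
  rw [hsplit]
  have key : (r + ρ) ^ n * L * ρ ^ (δ - p) + 2 * r ^ n * k ≤ C * Real.exp (C * r) := by
    have h1 : (r + ρ) ^ n ≤ 2 ^ n * r ^ n := by
      rw [← mul_pow]
      exact pow_le_pow_left₀ (by linarith) (by linarith) n
    have h2 : r ^ n ≤ Real.exp (↑n * r) := by
      rw [Real.exp_nat_mul]
      exact pow_le_pow_left₀ hr0.le (by linarith [Real.add_one_le_exp r]) n
    have h3 : Real.exp (↑n * r) ≤ Real.exp (C * r) := by
      apply Real.exp_le_exp.mpr
      apply mul_le_mul_of_nonneg_right _ hr0.le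
      rw [hC]; linarith
    calc (r + ρ) ^ n * L * ρ ^ (δ - p) + 2 * r ^ n * k
        ≤ 2 ^ n * r ^ n * L * ρ ^ (δ - p) + 2 * r ^ n * k := by
          have := mul_le_mul_of_nonneg_right (mul_le_mul_of_nonneg_right h1 hL.le) hρδp.le
          linarith
      _ = r ^ n * A := by rw [hA]; ring
      _ ≤ Real.exp (C * r) * A := mul_le_mul_of_nonneg_right (h2.trans h3) hA0.le
      _ ≤ Real.exp (C * r) * C := by
          apply mul_le_mul_of_nonneg_left _ (Real.exp_pos _).le
          rw [hC]; have : (0:ℝ) ≤ (n:ℝ) := Nat.cast_nonneg n; linarith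
      _ = C * Real.exp (C * r) := mul_comm _ _
  calc (r + ρ) ^ n * k * (L * (ρ ^ n * ρ ^ (δ - p))) + 2 * (ρ ^ n * k) * (r ^ n * k)
      = (ρ ^ n * k) * ((r + ρ) ^ n * L * ρ ^ (δ - p) + 2 * r ^ n * k) := by ring
    _ ≤ (ρ ^ n * k) * (C * Real.exp (C * r)) := by
        apply mul_le_mul_of_nonneg_left key (by positivity)

/-- Large-radius growth bound for ∫ √(f²+1) under the Morrey-type condition
(covering-argument step in the proof of Proposition 2.2 of the paper). -/
theorem stmt5 (n : ℕ) (hn : 1 ≤ n) (p δ r₀ L : ℝ) (hp : 1 ≤ p) (hδ : 0 < δ)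
    (hδp : δ ≤ p) (hr₀ : 0 < r₀) (hr₀1 : r₀ ≤ 1) (hL : 0 < L) :
    ∃ C : ℝ, 0 < C ∧
      ∀ f : EuclideanSpace ℝ (Fin n) → ℝ, Measurable f → (∀ x, 0 ≤ f x) →
      (∀ (x₀ : EuclideanSpace ℝ (Fin n)) (r : ℝ), 0 < r → r < r₀ →
        (∫⁻ x in Metric.ball x₀ r, ENNReal.ofReal (f x ^ p)) ≤
          ENNReal.ofReal (L * r ^ ((n : ℝ) - p + δ))) →
      ∀ (x₀ : EuclideanSpace ℝ (Fin n)) (r : ℝ), r₀ ≤ r →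
        (∫⁻ x in Metric.ball x₀ r, ENNReal.ofReal (Real.sqrt (f x ^ 2 + 1))) ≤
          ENNReal.ofReal (C * Real.exp (C * r)) := by
  have hnontriv : Nontrivial (EuclideanSpace ℝ (Fin n)) := by
    have : Nonempty (Fin n) := ⟨⟨0, hn⟩⟩
    infer_instance
  set ρ : ℝ := r₀ / 2 with hρdef
  have hρ : 0 < ρ := by positivity
  have hρr₀ : ρ < r₀ := by rw [hρdef]; linarith
  set K : ENNReal := volume (ball (0 : EuclideanSpace ℝ (Fin n)) 1) with hKdef
  have hK0 : K ≠ 0 := (measure_ball_pos _ _ one_pos).ne'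
  have hKt : K ≠ ⊤ := measure_ball_lt_top.ne
  set k : ℝ := K.toReal with hkdef
  have hk0 : 0 < k := ENNReal.toReal_pos hK0 hKt
  have hKk : K = ENNReal.ofReal k := (ENNReal.ofReal_toReal hKt).symm
  set C : ℝ := 2 ^ n * L * ρ ^ (δ - p) + 2 * k + n + 1 with hCdef
  have hρδp : (0:ℝ) < ρ ^ (δ - p) := Real.rpow_pos_of_pos hρ _
  have hC0 : 0 < C := by positivity
  refine ⟨C, hC0, ?_⟩
  intro f hf hf0 hMor x₀ r hr
  have hr0 : 0 < r := lt_of_lt_of_le hr₀ hr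
  have hρr : ρ ≤ r := le_trans hρr₀.le hr
  set g : EuclideanSpace ℝ (Fin n) → ENNReal := fun x => ENNReal.ofReal (f x ^ p) with hgdef
  have hg : Measurable g := by fun_prop
  -- volumes
  have hballvol : ∀ (x : EuclideanSpace ℝ (Fin n)) (s : ℝ), 0 ≤ s →
      volume (ball x s) = ENNReal.ofReal (s ^ n) * K := by
    intro x s hs
    rw [Measure.addHaar_ball volume x hs, finrank_euclideanSpace_fin]
  set v : ENNReal := volume (ball (0 : EuclideanSpace ℝ (Fin n)) ρ) with hvdef
  have hv : v = ENNReal.ofReal (ρ ^ n) * K := hballvol _ _ hρ.le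
  have hv0 : v ≠ 0 := (measure_ball_pos _ _ hρ).ne'
  have hvt : v ≠ ⊤ := measure_ball_lt_top.ne
  -- step 1 : pointwise bound
  have step1 : (∫⁻ x in ball x₀ r, ENNReal.ofReal (Real.sqrt (f x ^ 2 + 1))) ≤
      (∫⁻ x in ball x₀ r, g x) + 2 * volume (ball x₀ r) := by
    calc (∫⁻ x in ball x₀ r, ENNReal.ofReal (Real.sqrt (f x ^ 2 + 1)))
        ≤ ∫⁻ x in ball x₀ r, (g x + 2) := by
          apply setLIntegral_mono' measurableSet_ball
          intro x _
          calc ENNReal.ofReal (Real.sqrt (f x ^ 2 + 1))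
              ≤ ENNReal.ofReal (f x ^ p + 2) :=
                ENNReal.ofReal_le_ofReal (ptwise_bound' (f x) p (hf0 x) hp)
            _ = g x + 2 := by
                rw [ENNReal.ofReal_add (Real.rpow_nonneg (hf0 x) p) (by norm_num)]
                norm_num
                rfl
      _ = (∫⁻ x in ball x₀ r, g x) + 2 * volume (ball x₀ r) := by
          rw [lintegral_add_right _ measurable_const, setLIntegral_const]
  -- step 2 : covering bound
  have step2 : v * (∫⁻ x in ball x₀ r, g x) ≤
      volume (ball x₀ (r + ρ)) * ENNReal.ofReal (L * ρ ^ ((n:ℝ) - p + δ)) := by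
    refine (covering_step' g hg x₀ r ρ).trans ?_
    calc (∫⁻ y in ball x₀ (r + ρ), ∫⁻ x in ball y ρ, g x)
        ≤ ∫⁻ _ in ball x₀ (r + ρ), ENNReal.ofReal (L * ρ ^ ((n:ℝ) - p + δ)) :=
          setLIntegral_mono' measurableSet_ball (fun y _ => hMor y ρ hρ hρr₀)
      _ = ENNReal.ofReal (L * ρ ^ ((n:ℝ) - p + δ)) * volume (ball x₀ (r + ρ)) :=
          setLIntegral_const _ _
      _ = _ := mul_comm _ _
  -- assemble
  rw [← ENNReal.mul_le_mul_iff_right hv0 hvt]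
  calc v * (∫⁻ x in ball x₀ r, ENNReal.ofReal (Real.sqrt (f x ^ 2 + 1)))
      ≤ v * ((∫⁻ x in ball x₀ r, g x) + 2 * volume (ball x₀ r)) :=
        mul_le_mul_right step1 v
    _ = v * (∫⁻ x in ball x₀ r, g x) + 2 * v * volume (ball x₀ r) := by ring
    _ ≤ volume (ball x₀ (r + ρ)) * ENNReal.ofReal (L * ρ ^ ((n:ℝ) - p + δ))
          + 2 * v * volume (ball x₀ r) := add_le_add_left step2 _
    _ ≤ v * ENNReal.ofReal (C * Real.exp (C * r)) := by
        rw [hv, hballvol x₀ (r + ρ) (by linarith), hballvol x₀ r hr0.le, hKk]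
        rw [show (2:ENNReal) = ENNReal.ofReal 2 by norm_num]
        rw [← ENNReal.ofReal_mul (by positivity), ← ENNReal.ofReal_mul (by positivity),
          ← ENNReal.ofReal_mul (by positivity), ← ENNReal.ofReal_mul (by positivity),
          ← ENNReal.ofReal_mul (by positivity), ← ENNReal.ofReal_mul (by positivity),
          ← ENNReal.ofReal_add (by positivity) (by positivity),
          ← ENNReal.ofReal_mul (by positivity)]
        apply ENNReal.ofReal_le_ofReal
        calc (r + ρ) ^ n * k * (L * ρ ^ ((n:ℝ) - p + δ)) + 2 * (ρ ^ n * k) * (r ^ n * k)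
            ≤ (ρ ^ n * k) * (C * Real.exp (C * r)) :=
              real_ineq' n p δ L k ρ r hρ hρr hr0 hL hk0
          _ = ρ ^ n * k * (C * Real.exp (C * r)) := by ring
end

section
/- Let (X, d) be a metric space with a Borel measure μ, let x₀ ∈ X, and let Q : X → [0,∞) be Borel measurable. Let n ≥ 1, a ∈ (0,1), L, C₁, C₀ > 0 and 0 < r₀ ≤ 1, and suppose that ∫_{B(x₀,r)} Q dμ ≤ L r^{n−1+a} for all 0 < r < r₀, and ∫_{B(x₀,r)} Q dμ ≤ C₁ e^{C₁ r} for all r ≥ r₀. Then there exist T₀ ∈ (0,1] and C′ > 0, depending only on n, a, L, C₁, C₀ and r₀, such that for all 0 < T ≤ T₀, ∫_X T^{−n/2} exp(−d(x₀,y)²/(C₀ T)) Q(y) dμ(y) ≤ C′ T^{−(1−a)/2}. -/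
open MeasureTheory Metric
open scoped ENNReal NNReal

lemma aux_geom_sum_le {r : ℝ} (h0 : 0 ≤ r) (h1 : r < 1) (N : ℕ) :
    ∑ i ∈ Finset.range N, r ^ i ≤ (1 - r)⁻¹ :=
  (Summable.sum_le_tsum _ (fun i _ => pow_nonneg h0 i)
    (summable_geometric_of_lt_one h0 h1)).trans_eq (tsum_geometric_of_lt_one h0 h1)

lemma aux_exp_neg_mul_pow_le {x : ℝ} (hx : 0 < x) (m : ℕ) :
    Real.exp (-x) * x ^ m ≤ m.factorial := by
  have hf : (0:ℝ) < m.factorial := by positivity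
  have h := Real.pow_div_factorial_le_exp (x := x) hx.le m
  rw [div_le_iff₀ hf] at h
  calc Real.exp (-x) * x ^ m ≤ Real.exp (-x) * (Real.exp x * m.factorial) := by
        exact mul_le_mul_of_nonneg_left h (Real.exp_nonneg _)
    _ = m.factorial := by rw [← mul_assoc, ← Real.exp_add]; simp

lemma aux_exp_neg_le {x : ℝ} (hx : 0 < x) (m : ℕ) :
    Real.exp (-x) ≤ m.factorial / x ^ m := by
  rw [le_div_iff₀ (pow_pos hx m)]
  exact aux_exp_neg_mul_pow_le hx m

lemma aux_rpow_pow {x : ℝ} (hx : 0 ≤ x) (c : ℝ) (j : ℕ) :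
    (x ^ j) ^ c = (x ^ c) ^ j := by
  rw [← Real.rpow_natCast x j, ← Real.rpow_mul hx, mul_comm, Real.rpow_mul hx,
    Real.rpow_natCast]

lemma aux_sqrt_rpow {T : ℝ} (hT : 0 < T) (c : ℝ) :
    Real.sqrt T ^ c = T ^ (c / 2) := by
  rw [Real.sqrt_eq_rpow, ← Real.rpow_mul hT.le]
  ring_nf

lemma inner_w_le_geom (b C₀ r₁ T : ℝ) (hb : 0 < b) (hC₀ : 0 < C₀) (hr₁ : 0 < r₁)
    (hT : 0 < T) (j : ℕ) :
    Real.exp (-(r₁ * (1/2:ℝ) ^ (j+1)) ^ 2 / (C₀ * T)) * (r₁ * (1/2:ℝ) ^ j) ^ b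
      ≤ r₁ ^ b * ((1/2:ℝ) ^ b) ^ j := by
  have h1 : (r₁ * (1/2:ℝ) ^ j) ^ b = r₁ ^ b * ((1/2:ℝ) ^ b) ^ j := by
    rw [Real.mul_rpow hr₁.le (by positivity), aux_rpow_pow (by norm_num)]
  have h2 : Real.exp (-(r₁ * (1/2:ℝ) ^ (j+1)) ^ 2 / (C₀ * T)) ≤ 1 := by
    apply Real.exp_le_one_iff.mpr
    apply div_nonpos_of_nonpos_of_nonneg (neg_nonpos.mpr (by positivity)) (by positivity)
  calc Real.exp (-(r₁ * (1/2:ℝ) ^ (j+1)) ^ 2 / (C₀ * T)) * (r₁ * (1/2:ℝ) ^ j) ^ b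
      ≤ 1 * (r₁ * (1/2:ℝ) ^ j) ^ b := by
        apply mul_le_mul_of_nonneg_right h2 (Real.rpow_nonneg (by positivity) b)
    _ = r₁ ^ b * ((1/2:ℝ) ^ b) ^ j := by rw [one_mul, h1]

lemma inner_w_summable (b C₀ r₁ T : ℝ) (hb : 0 < b) (hC₀ : 0 < C₀) (hr₁ : 0 < r₁)
    (hT : 0 < T) :
    Summable (fun j : ℕ =>
      Real.exp (-(r₁ * (1/2:ℝ) ^ (j+1)) ^ 2 / (C₀ * T)) * (r₁ * (1/2:ℝ) ^ j) ^ b) := by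
  apply Summable.of_nonneg_of_le (fun j => by positivity)
    (inner_w_le_geom b C₀ r₁ T hb hC₀ hr₁ hT)
  apply Summable.mul_left
  apply summable_geometric_of_lt_one (by positivity)
  exact Real.rpow_lt_one (by norm_num) (by norm_num) hb

lemma inner_sum_bound (b C₀ r₁ T : ℝ) (m : ℕ) (hb : 0 < b) (hC₀ : 0 < C₀) (hr₁ : 0 < r₁)
    (hT : 0 < T) (hm : b + 2 ≤ 2 * (m:ℝ)) :
    ∑' j : ℕ, Real.exp (-(r₁ * (1/2:ℝ) ^ (j+1)) ^ 2 / (C₀ * T)) * (r₁ * (1/2:ℝ) ^ j) ^ b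
      ≤ ((4/3) * m.factorial * (4*C₀)^m + (1 - (1/2:ℝ) ^ b)⁻¹) * T ^ (b/2) := by
  set s : ℕ → ℝ := fun j => r₁ * (1/2:ℝ) ^ j with hs_def
  set w : ℕ → ℝ := fun j => Real.exp (-(s (j+1)) ^ 2 / (C₀ * T)) * (s j) ^ b with hw_def
  set q : ℝ := (1/2:ℝ) ^ b with hq_def
  set τ : ℝ := Real.sqrt T with hτ_def
  have hτ : 0 < τ := Real.sqrt_pos.mpr hT
  have hs_pos : ∀ j, 0 < s j := fun j => by positivity
  have hq0 : 0 < q := Real.rpow_pos_of_pos (by norm_num) b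
  have hq1 : q < 1 := Real.rpow_lt_one (by norm_num) (by norm_num) hb
  have hgeom : Summable (fun j : ℕ => q ^ j) :=
    summable_geometric_of_lt_one hq0.le hq1
  have hsum : Summable w := inner_w_summable b C₀ r₁ T hb hC₀ hr₁ hT
  have hw_nonneg : ∀ j, 0 ≤ w j := fun j => by positivity
  have hsb : ∀ j, s j ^ b = r₁ ^ b * q ^ j := by
    intro j
    rw [hs_def, Real.mul_rpow hr₁.le (by positivity), aux_rpow_pow (by norm_num)]
  -- existence of threshold index
  have hex : ∃ j : ℕ, s j ≤ τ := by
    obtain ⟨j, hj⟩ := exists_pow_lt_of_lt_one (x := τ / r₁) (y := (1/2:ℝ))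
      (by positivity) (by norm_num)
    refine ⟨j, le_of_lt ?_⟩
    have := mul_lt_mul_of_pos_left hj hr₁
    calc s j = r₁ * (1/2:ℝ)^j := rfl
      _ < r₁ * (τ / r₁) := this
      _ = τ := by field_simp
  set j₀ := Nat.find hex with hj₀_def
  have hj₀ : s j₀ ≤ τ := Nat.find_spec hex
  have hj₀' : ∀ j < j₀, τ < s j := fun j hj => not_le.mp (Nat.find_min hex hj)
  rw [← Summable.sum_add_tsum_nat_add j₀ hsum]
  -- Tail bound
  have htail : ∑' j : ℕ, w (j + j₀) ≤ (1 - q)⁻¹ * T ^ (b/2) := by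
    have hper : ∀ j : ℕ, w (j + j₀) ≤ T ^ (b/2) * q ^ j := by
      intro j
      have h1 : w (j + j₀) ≤ s (j + j₀) ^ b := by
        have hle1 : Real.exp (-(s (j + j₀ + 1)) ^ 2 / (C₀ * T)) ≤ 1 :=
          Real.exp_le_one_iff.mpr (div_nonpos_of_nonpos_of_nonneg
            (neg_nonpos.mpr (by positivity)) (by positivity))
        calc w (j + j₀) ≤ 1 * s (j + j₀) ^ b := by
              apply mul_le_mul_of_nonneg_right hle1 (Real.rpow_nonneg (hs_pos _).le b)
          _ = s (j + j₀) ^ b := one_mul _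
      have h2 : s (j + j₀) ^ b = s j₀ ^ b * q ^ j := by
        rw [hsb, hsb, pow_add, mul_comm (q ^ j)]
        ring
      have h3 : s j₀ ^ b ≤ T ^ (b/2) := by
        rw [← aux_sqrt_rpow hT b]
        exact Real.rpow_le_rpow (hs_pos j₀).le hj₀ hb.le
      calc w (j + j₀) ≤ s j₀ ^ b * q ^ j := h1.trans_eq h2
        _ ≤ T ^ (b/2) * q ^ j := by
            apply mul_le_mul_of_nonneg_right h3 (pow_nonneg hq0.le j)
    calc ∑' j : ℕ, w (j + j₀) ≤ ∑' j : ℕ, T ^ (b/2) * q ^ j := by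
          apply Summable.tsum_le_tsum hper ((summable_nat_add_iff j₀).mpr hsum)
            (hgeom.mul_left _)
      _ = T ^ (b/2) * (1 - q)⁻¹ := by
          rw [tsum_mul_left, tsum_geometric_of_lt_one hq0.le hq1]
      _ = (1 - q)⁻¹ * T ^ (b/2) := mul_comm _ _
  -- Head bound
  have hhead : ∑ j ∈ Finset.range j₀, w j ≤ (4/3) * m.factorial * (4*C₀)^m * T ^ (b/2) := by
    set c : ℝ := b - 2 * m with hc_def
    have hc2 : c ≤ -2 := by simp only [hc_def]; linarith
    have hper : ∀ j ∈ Finset.range j₀,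
        w j ≤ (m.factorial * (4*C₀*T)^m * τ ^ c) * (1/4:ℝ) ^ (j₀ - 1 - j) := by
      intro j hj
      rw [Finset.mem_range] at hj
      have hsτ : τ < s j := hj₀' j hj
      -- rewrite the exponential argument
      have harg : -(s (j+1)) ^ 2 / (C₀ * T) = -(s j ^ 2 / (4 * C₀ * T)) := by
        have : s (j+1) = s j * (1/2) := by
          simp only [hs_def, pow_succ]; ring
        rw [this]; field_simp; ring
      have hv : 0 < s j ^ 2 / (4 * C₀ * T) := by positivity
      have hexp : Real.exp (-(s (j+1)) ^ 2 / (C₀ * T)) ≤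
          m.factorial * (4*C₀*T)^m / s j ^ (2*m) := by
        rw [harg]
        calc Real.exp (-(s j ^ 2 / (4 * C₀ * T))) ≤
            m.factorial / (s j ^ 2 / (4 * C₀ * T)) ^ m := aux_exp_neg_le hv m
          _ = m.factorial * (4*C₀*T)^m / s j ^ (2*m) := by
              rw [div_pow, pow_mul]
              field_simp
      have hw1 : w j ≤ m.factorial * (4*C₀*T)^m * s j ^ c := by
        have : s j ^ c = s j ^ b / s j ^ (2*m) := by
          rw [← Real.rpow_natCast (s j) (2*m), ← Real.rpow_sub (hs_pos j)]
          congr 1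
          push_cast
          ring
        rw [this]
        calc w j ≤ (m.factorial * (4*C₀*T)^m / s j ^ (2*m)) * s j ^ b := by
              apply mul_le_mul_of_nonneg_right hexp (Real.rpow_nonneg (hs_pos j).le b)
          _ = m.factorial * (4*C₀*T)^m * (s j ^ b / s j ^ (2*m)) := by ring
      have hsj : s j = s (j₀ - 1) * (2:ℝ) ^ (j₀ - 1 - j) := by
        obtain ⟨i, hi⟩ : ∃ i, j₀ - 1 = i + j := ⟨j₀ - 1 - j, by omega⟩
        have hij : j₀ - 1 - j = i := by omega
        rw [hij, hi]
        simp only [hs_def, pow_add]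
        have hone : ((1/2:ℝ)) ^ i * (2:ℝ) ^ i = 1 := by rw [← mul_pow]; norm_num
        calc r₁ * (1/2:ℝ) ^ j
            = r₁ * (1/2:ℝ) ^ j * ((1/2:ℝ) ^ i * (2:ℝ) ^ i) := by rw [hone, mul_one]
          _ = r₁ * ((1/2:ℝ) ^ i * (1/2:ℝ) ^ j) * (2:ℝ) ^ i := by ring
      have h2c : (2:ℝ) ^ c ≤ 1/4 := by
        have : (2:ℝ) ^ c ≤ (2:ℝ) ^ (-2:ℝ) :=
          Real.rpow_le_rpow_of_exponent_le one_le_two hc2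
        calc (2:ℝ) ^ c ≤ (2:ℝ) ^ (-2:ℝ) := this
          _ = 1/4 := by
            rw [Real.rpow_neg (by norm_num), show ((2:ℝ) ^ (2:ℝ)) = 4 by
              rw [show (2:ℝ) = ((2:ℕ):ℝ) by norm_num, Real.rpow_natCast]; norm_num]
            norm_num
      have hsc : s j ^ c ≤ τ ^ c * (1/4:ℝ) ^ (j₀ - 1 - j) := by
        rw [hsj, Real.mul_rpow (hs_pos _).le (by positivity), aux_rpow_pow (by norm_num : (0:ℝ) ≤ 2)]
        have e1 : s (j₀ - 1) ^ c ≤ τ ^ c := by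
          apply Real.rpow_le_rpow_of_nonpos hτ (hj₀' (j₀ - 1) (by omega)).le
          linarith
        have e2 : ((2:ℝ) ^ c) ^ (j₀ - 1 - j) ≤ (1/4:ℝ) ^ (j₀ - 1 - j) :=
          pow_le_pow_left₀ (Real.rpow_nonneg (by norm_num) c) h2c _
        apply mul_le_mul e1 e2 (pow_nonneg (Real.rpow_nonneg (by norm_num) c) _)
          (Real.rpow_nonneg hτ.le c)
      calc w j ≤ m.factorial * (4*C₀*T)^m * s j ^ c := hw1
        _ ≤ m.factorial * (4*C₀*T)^m * (τ ^ c * (1/4:ℝ) ^ (j₀ - 1 - j)) := by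
            apply mul_le_mul_of_nonneg_left hsc (by positivity)
        _ = (m.factorial * (4*C₀*T)^m * τ ^ c) * (1/4:ℝ) ^ (j₀ - 1 - j) := by ring
    have hsum_reflect : ∑ j ∈ Finset.range j₀, (1/4:ℝ) ^ (j₀ - 1 - j) ≤ 4/3 := by
      have := Finset.sum_range_reflect (fun i => (1/4:ℝ) ^ i) j₀
      calc ∑ j ∈ Finset.range j₀, (1/4:ℝ) ^ (j₀ - 1 - j)
          = ∑ j ∈ Finset.range j₀, (1/4:ℝ) ^ j := this
        _ ≤ (1 - 1/4)⁻¹ := aux_geom_sum_le (by norm_num) (by norm_num) j₀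
        _ = 4/3 := by norm_num
    have halg : (m.factorial : ℝ) * (4*C₀*T)^m * τ ^ c
        = (m.factorial : ℝ) * (4*C₀)^m * T ^ (b/2) := by
      have h1 : τ ^ c = T ^ (c/2) := aux_sqrt_rpow hT c
      have h2 : ((4*C₀*T):ℝ)^m = (4*C₀)^m * T^m := by rw [mul_pow]
      have h3 : (T:ℝ)^m * T ^ (c/2) = T ^ (b/2) := by
        rw [← Real.rpow_natCast T m, ← Real.rpow_add hT]
        congr 1
        simp only [hc_def]
        push_cast
        ring
      rw [h1, h2]
      calc (m.factorial : ℝ) * ((4*C₀)^m * T^m) * T^(c/2)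
          = (m.factorial : ℝ) * (4*C₀)^m * (T^m * T^(c/2)) := by ring
        _ = (m.factorial : ℝ) * (4*C₀)^m * T^(b/2) := by rw [h3]
    calc ∑ j ∈ Finset.range j₀, w j
        ≤ ∑ j ∈ Finset.range j₀, ((m.factorial : ℝ) * (4*C₀*T)^m * τ ^ c) * (1/4:ℝ)^(j₀-1-j) :=
          Finset.sum_le_sum hper
      _ = ((m.factorial : ℝ) * (4*C₀*T)^m * τ ^ c) * ∑ j ∈ Finset.range j₀, (1/4:ℝ)^(j₀-1-j) := by
          rw [← Finset.mul_sum]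
      _ ≤ ((m.factorial : ℝ) * (4*C₀*T)^m * τ ^ c) * (4/3) := by
          apply mul_le_mul_of_nonneg_left hsum_reflect (by positivity)
      _ = (4/3) * m.factorial * (4*C₀)^m * T ^ (b/2) := by rw [halg]; ring
  calc ∑ j ∈ Finset.range j₀, w j + ∑' j : ℕ, w (j + j₀)
      ≤ (4/3) * m.factorial * (4*C₀)^m * T ^ (b/2) + (1 - q)⁻¹ * T ^ (b/2) :=
        add_le_add hhead htail
    _ = ((4/3) * m.factorial * (4*C₀)^m + (1 - q)⁻¹) * T ^ (b/2) := by ring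

lemma outer_term_bound (n : ℕ) (C₀ C₁ r₁ T : ℝ) (hC₀ : 0 < C₀) (hC₁ : 0 < C₁)
    (hr₁ : 0 < r₁) (hT : 0 < T) (hT1 : T ≤ 1) (k : ℕ) :
    T ^ (-(n:ℝ)/2) * Real.exp (-(r₁ * 2^k) ^ 2 / (C₀ * T)) *
        (C₁ * Real.exp (C₁ * (r₁ * 2^(k+1))))
      ≤ ((n.factorial : ℝ) * (2*C₀/r₁^2)^n * (C₁ * Real.exp (4*C₁^2*C₀)))
          * (Real.exp (-(r₁^2) / (4*C₀)))^k := by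
  set R : ℝ := r₁ * 2^k with hR_def
  have h2k : (1:ℝ) ≤ 2^k := one_le_pow₀ one_le_two
  have hk4 : ((k:ℝ) + 1) ≤ ((2:ℝ)^k)^2 := by
    have h1 : (k:ℕ) < 2^k := Nat.lt_two_pow_self
    have h1' : ((k:ℝ) + 1) ≤ (2:ℝ)^k := by exact_mod_cast Nat.succ_le_of_lt h1
    nlinarith
  have hR0 : 0 < R := by positivity
  have hRr : r₁ ≤ R := by
    rw [hR_def]; nlinarith
  have hsplit : Real.exp (-R ^ 2 / (C₀ * T))
      = Real.exp (-R ^ 2 / (2 * C₀ * T)) * Real.exp (-R ^ 2 / (2 * C₀ * T)) := by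
    rw [← Real.exp_add]
    congr 1
    field_simp
    ring
  -- Part A
  have hA : T ^ (-(n:ℝ)/2) * Real.exp (-R ^ 2 / (2 * C₀ * T))
      ≤ (n.factorial : ℝ) * (2*C₀/r₁^2)^n := by
    have hmono : Real.exp (-R ^ 2 / (2 * C₀ * T)) ≤ Real.exp (-r₁ ^ 2 / (2 * C₀ * T)) := by
      apply Real.exp_le_exp.mpr
      apply div_le_div_of_nonneg_right ?_ (by positivity)
      · nlinarith
    have hx : (0:ℝ) < r₁^2 / (2 * C₀ * T) := by positivity
    have hexp : Real.exp (-r₁ ^ 2 / (2 * C₀ * T))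
        ≤ (n.factorial : ℝ) / (r₁^2 / (2 * C₀ * T)) ^ n := by
      rw [show -r₁ ^ 2 / (2 * C₀ * T) = -(r₁^2 / (2 * C₀ * T)) by ring]
      exact aux_exp_neg_le hx n
    have heq : (n.factorial : ℝ) / (r₁^2 / (2 * C₀ * T)) ^ n
        = (n.factorial : ℝ) * (2*C₀/r₁^2)^n * T^n := by
      rw [div_pow, div_pow, mul_pow]
      field_simp
    have hTn : T ^ (-(n:ℝ)/2) * T ^ (n:ℕ) ≤ 1 := by
      rw [← Real.rpow_natCast T n, ← Real.rpow_add hT]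
      apply Real.rpow_le_one hT.le hT1
      have hn0 : (0:ℝ) ≤ (n:ℝ) := Nat.cast_nonneg n
      linarith
    calc T ^ (-(n:ℝ)/2) * Real.exp (-R ^ 2 / (2 * C₀ * T))
        ≤ T ^ (-(n:ℝ)/2) * ((n.factorial : ℝ) * (2*C₀/r₁^2)^n * T^n) := by
          apply mul_le_mul_of_nonneg_left (hmono.trans (hexp.trans_eq heq))
            (Real.rpow_nonneg hT.le _)
      _ = ((n.factorial : ℝ) * (2*C₀/r₁^2)^n) * (T ^ (-(n:ℝ)/2) * T^n) := by ring
      _ ≤ ((n.factorial : ℝ) * (2*C₀/r₁^2)^n) * 1 := by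
          apply mul_le_mul_of_nonneg_left hTn (by positivity)
      _ = (n.factorial : ℝ) * (2*C₀/r₁^2)^n := mul_one _
  -- Part B
  have hB : Real.exp (-R ^ 2 / (2 * C₀ * T)) * (C₁ * Real.exp (C₁ * (r₁ * 2^(k+1))))
      ≤ C₁ * Real.exp (4*C₁^2*C₀) * (Real.exp (-(r₁^2) / (4*C₀)))^k := by
    have hRk1 : r₁ * 2^(k+1) = 2 * R := by rw [hR_def, pow_succ]; ring
    have hcomb : Real.exp (-R ^ 2 / (2 * C₀ * T)) * Real.exp (C₁ * (r₁ * 2^(k+1)))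
        = Real.exp (C₁ * (2 * R) - R ^ 2 / (2 * C₀ * T)) := by
      rw [← Real.exp_add, hRk1]
      congr 1
      ring
    have hexpo : C₁ * (2 * R) - R ^ 2 / (2 * C₀ * T)
        ≤ 4*C₁^2*C₀ + (k:ℝ) * (-(r₁^2) / (4*C₀)) := by
      have h1 : R ^ 2 / (2 * C₀) ≤ R ^ 2 / (2 * C₀ * T) := by
        apply div_le_div_of_nonneg_left (by positivity) (by positivity)
        nlinarith
      have h4C : (0:ℝ) < 4*C₀ := by positivity
      have h2 : C₁ * (2 * R) - R ^ 2 / (4 * C₀) ≤ 4*C₁^2*C₀ := by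
        have hfrac : R^2/(4*C₀)*(4*C₀) = R^2 := div_mul_cancel₀ _ (ne_of_gt h4C)
        have hpoly : C₁*(2*R)*(4*C₀) ≤ ((4*C₁^2*C₀) + R^2/(4*C₀))*(4*C₀) := by
          nlinarith [sq_nonneg (R - 4*C₁*C₀)]
        have h2' := le_of_mul_le_mul_right hpoly h4C
        linarith
      have h3 : ((k:ℝ) + 1) * r₁^2 ≤ R^2 := by
        rw [hR_def, mul_pow]
        nlinarith [sq_nonneg r₁]
      have h4 : C₁ * (2 * R) - R ^ 2 / (2 * C₀ * T)
          ≤ C₁ * (2 * R) - R ^ 2 / (4 * C₀) - R ^ 2 / (4 * C₀) := by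
        have : R ^ 2 / (2 * C₀) = R ^ 2 / (4 * C₀) + R ^ 2 / (4 * C₀) := by ring
        linarith
      have h5 : ((k:ℝ) + 1) * r₁^2 / (4 * C₀) ≤ R ^ 2 / (4 * C₀) := by gcongr
      calc C₁ * (2 * R) - R ^ 2 / (2 * C₀ * T)
          ≤ C₁ * (2 * R) - R ^ 2 / (4 * C₀) - R ^ 2 / (4 * C₀) := h4
        _ ≤ 4*C₁^2*C₀ - R ^ 2 / (4 * C₀) := by linarith
        _ ≤ 4*C₁^2*C₀ - ((k:ℝ) + 1) * r₁^2 / (4 * C₀) := by linarith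
        _ = 4*C₁^2*C₀ + (k:ℝ) * (-(r₁^2) / (4*C₀)) + (-(r₁^2) / (4 * C₀)) := by ring
        _ ≤ 4*C₁^2*C₀ + (k:ℝ) * (-(r₁^2) / (4*C₀)) := by
            have hneg : -(r₁^2) / (4 * C₀) ≤ 0 := by
              apply div_nonpos_of_nonpos_of_nonneg (neg_nonpos.mpr (by positivity))
                (by positivity)
            linarith
    calc Real.exp (-R ^ 2 / (2 * C₀ * T)) * (C₁ * Real.exp (C₁ * (r₁ * 2^(k+1))))
        = C₁ * (Real.exp (-R ^ 2 / (2 * C₀ * T)) * Real.exp (C₁ * (r₁ * 2^(k+1)))) := by ring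
      _ = C₁ * Real.exp (C₁ * (2 * R) - R ^ 2 / (2 * C₀ * T)) := by rw [hcomb]
      _ ≤ C₁ * Real.exp (4*C₁^2*C₀ + (k:ℝ) * (-(r₁^2) / (4*C₀))) := by
          apply mul_le_mul_of_nonneg_left (Real.exp_le_exp.mpr hexpo) hC₁.le
      _ = C₁ * Real.exp (4*C₁^2*C₀) * (Real.exp (-(r₁^2) / (4*C₀)))^k := by
          rw [Real.exp_add, ← Real.exp_nat_mul]
          ring
  calc T ^ (-(n:ℝ)/2) * Real.exp (-R ^ 2 / (C₀ * T)) * (C₁ * Real.exp (C₁ * (r₁ * 2^(k+1))))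
      = (T ^ (-(n:ℝ)/2) * Real.exp (-R ^ 2 / (2 * C₀ * T)))
        * (Real.exp (-R ^ 2 / (2 * C₀ * T)) * (C₁ * Real.exp (C₁ * (r₁ * 2^(k+1))))) := by
        rw [hsplit]; ring
    _ ≤ ((n.factorial : ℝ) * (2*C₀/r₁^2)^n)
        * (C₁ * Real.exp (4*C₁^2*C₀) * (Real.exp (-(r₁^2) / (4*C₀)))^k) := by
        apply mul_le_mul hA hB (by positivity) (by positivity)
    _ = ((n.factorial : ℝ) * (2*C₀/r₁^2)^n * (C₁ * Real.exp (4*C₁^2*C₀)))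
        * (Real.exp (-(r₁^2) / (4*C₀)))^k := by ring

lemma outer_summable (n : ℕ) (C₀ C₁ r₁ T : ℝ) (hC₀ : 0 < C₀) (hC₁ : 0 < C₁)
    (hr₁ : 0 < r₁) (hT : 0 < T) (hT1 : T ≤ 1) :
    Summable (fun k : ℕ => T ^ (-(n:ℝ)/2) * Real.exp (-(r₁ * 2^k) ^ 2 / (C₀ * T)) *
        (C₁ * Real.exp (C₁ * (r₁ * 2^(k+1))))) := by
  have hρ1 : Real.exp (-(r₁^2) / (4*C₀)) < 1 := by
    apply Real.exp_lt_one_iff.mpr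
    apply div_neg_of_neg_of_pos (neg_neg_iff_pos.mpr (by positivity)) (by positivity)
  apply Summable.of_nonneg_of_le (fun k => by positivity)
    (outer_term_bound n C₀ C₁ r₁ T hC₀ hC₁ hr₁ hT hT1)
  exact (summable_geometric_of_lt_one (Real.exp_nonneg _) hρ1).mul_left _

lemma outer_sum_bound (n : ℕ) (C₀ C₁ r₁ T : ℝ) (hC₀ : 0 < C₀) (hC₁ : 0 < C₁)
    (hr₁ : 0 < r₁) (hT : 0 < T) (hT1 : T ≤ 1) :
    ∑' k : ℕ, (T ^ (-(n:ℝ)/2) * Real.exp (-(r₁ * 2^k) ^ 2 / (C₀ * T)) *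
        (C₁ * Real.exp (C₁ * (r₁ * 2^(k+1)))))
      ≤ ((n.factorial : ℝ) * (2*C₀/r₁^2)^n * (C₁ * Real.exp (4*C₁^2*C₀)))
          * (1 - Real.exp (-(r₁^2) / (4*C₀)))⁻¹ := by
  have hρ1 : Real.exp (-(r₁^2) / (4*C₀)) < 1 := by
    apply Real.exp_lt_one_iff.mpr
    apply div_neg_of_neg_of_pos (neg_neg_iff_pos.mpr (by positivity)) (by positivity)
  have hgeom := summable_geometric_of_lt_one (Real.exp_nonneg (-(r₁^2) / (4*C₀))) hρ1
  calc ∑' k : ℕ, (T ^ (-(n:ℝ)/2) * Real.exp (-(r₁ * 2^k) ^ 2 / (C₀ * T)) *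
          (C₁ * Real.exp (C₁ * (r₁ * 2^(k+1)))))
      ≤ ∑' k : ℕ, ((n.factorial : ℝ) * (2*C₀/r₁^2)^n * (C₁ * Real.exp (4*C₁^2*C₀)))
          * (Real.exp (-(r₁^2) / (4*C₀)))^k := by
        apply Summable.tsum_le_tsum (outer_term_bound n C₀ C₁ r₁ T hC₀ hC₁ hr₁ hT hT1)
          (outer_summable n C₀ C₁ r₁ T hC₀ hC₁ hr₁ hT hT1) (hgeom.mul_left _)
    _ = ((n.factorial : ℝ) * (2*C₀/r₁^2)^n * (C₁ * Real.exp (4*C₁^2*C₀)))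
          * (1 - Real.exp (-(r₁^2) / (4*C₀)))⁻¹ := by
        rw [tsum_mul_left, tsum_geometric_of_lt_one (Real.exp_nonneg _) hρ1]

set_option maxHeartbeats 2000000 in
/-- The heat-kernel pairing estimate (2.13)–(2.14) in the proof of the gradient
estimate, Proposition 2.2 of the paper: a Gaussian kernel paired against a
function with Morrey-type ball bounds is bounded by C′ T^{−(1−a)/2}. -/
theorem stmt9 (n : ℕ) (hn : 1 ≤ n) (a L C₁ C₀ r₀ : ℝ) (ha0 : 0 < a) (ha1 : a < 1)
    (hL : 0 < L) (hC₁ : 0 < C₁) (hC₀ : 0 < C₀) (hr₀0 : 0 < r₀) (hr₀1 : r₀ ≤ 1) :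
    ∃ T₀ C' : ℝ, 0 < T₀ ∧ T₀ ≤ 1 ∧ 0 < C' ∧
      ∀ (X : Type) (_ : MetricSpace X) (_ : MeasurableSpace X)
        (_ : OpensMeasurableSpace X) (μ : Measure X) (_ : SFinite μ)
        (x₀ : X) (Q : X → ℝ), Measurable Q → (∀ y, 0 ≤ Q y) →
        (∀ r : ℝ, 0 < r → r < r₀ →
          (∫⁻ y in Metric.ball x₀ r, ENNReal.ofReal (Q y) ∂μ) ≤
            ENNReal.ofReal (L * r ^ ((n : ℝ) - 1 + a))) →
        (∀ r : ℝ, r₀ ≤ r →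
          (∫⁻ y in Metric.ball x₀ r, ENNReal.ofReal (Q y) ∂μ) ≤
            ENNReal.ofReal (C₁ * Real.exp (C₁ * r))) →
        ∀ T : ℝ, 0 < T → T ≤ T₀ →
          (∫⁻ y, ENNReal.ofReal
              (T ^ (-(n : ℝ)/2) * Real.exp (-(dist x₀ y)^2 / (C₀ * T)) * Q y) ∂μ) ≤
            ENNReal.ofReal (C' * T ^ (-(1 - a)/2)) := by
  have hn1 : (1:ℝ) ≤ (n:ℝ) := by exact_mod_cast hn
  set b : ℝ := (n:ℝ) - 1 + a with hb_def
  have hb0 : 0 < b := by rw [hb_def]; linarith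
  set m : ℕ := n + 1 with hm_def
  set r₁ : ℝ := r₀ / 2 with hr₁_def
  have hr₁0 : 0 < r₁ := by positivity
  have hr₁r₀ : r₁ < r₀ := by rw [hr₁_def]; linarith
  set q : ℝ := (1/2:ℝ) ^ b with hq_def
  have hq0 : 0 < q := Real.rpow_pos_of_pos (by norm_num) b
  have hq1 : q < 1 := Real.rpow_lt_one (by norm_num) (by norm_num) hb0
  set G : ℝ := (4/3) * m.factorial * (4*C₀)^m + (1 - q)⁻¹ with hG_def
  have hG0 : 0 < G := by
    have h1 : (0:ℝ) < (1 - q)⁻¹ := inv_pos.mpr (by linarith)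
    have h2 : (0:ℝ) < (4/3) * m.factorial * (4*C₀)^m := by positivity
    rw [hG_def]; linarith
  set ρ : ℝ := Real.exp (-(r₁^2) / (4*C₀)) with hρ_def
  have hρ1 : ρ < 1 := by
    rw [hρ_def]
    apply Real.exp_lt_one_iff.mpr
    apply div_neg_of_neg_of_pos (neg_neg_iff_pos.mpr (by positivity)) (by positivity)
  set Cout : ℝ := ((n.factorial:ℝ) * (2*C₀/r₁^2)^n * (C₁ * Real.exp (4*C₁^2*C₀)))
      * (1 - ρ)⁻¹ with hCout_def
  have hCout0 : 0 < Cout := by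
    apply mul_pos (by positivity) (inv_pos.mpr (by linarith))
  have hC'0 : 0 < L * (1 + G) + Cout := by nlinarith
  refine ⟨1, L * (1 + G) + Cout, one_pos, le_refl 1, hC'0, ?_⟩
  intro X _i1 _i2 _i3 μ _i4 x₀ Q hQm hQ0 hQ1 hQ2 T hT0 hT1
  set Tp : ℝ := T ^ (-(n:ℝ)/2) with hTp_def
  have hTp0 : 0 ≤ Tp := Real.rpow_nonneg hT0.le _
  set s : ℕ → ℝ := fun j => r₁ * (1/2:ℝ) ^ j with hs_def
  set R : ℕ → ℝ := fun k => r₁ * 2 ^ k with hR_def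
  have hs_pos : ∀ j, 0 < s j := fun j => by rw [hs_def]; positivity
  have hs_lt : ∀ j, s j < r₀ := by
    intro j
    have h1 : (1/2:ℝ) ^ j ≤ 1 := pow_le_one₀ (by norm_num) (by norm_num)
    calc s j = r₁ * (1/2:ℝ) ^ j := rfl
      _ ≤ r₁ * 1 := mul_le_mul_of_nonneg_left h1 hr₁0.le
      _ < r₀ := by rw [mul_one]; exact hr₁r₀
  set w : ℕ → ℝ := fun j => Real.exp (-(s (j+1)) ^ 2 / (C₀ * T)) * (s j) ^ b with hw_def
  set v : ℕ → ℝ := fun k => Tp * Real.exp (-(R k) ^ 2 / (C₀ * T)) *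
      (C₁ * Real.exp (C₁ * (R (k+1)))) with hv_def
  set f : X → ℝ≥0∞ := fun y => ENNReal.ofReal
      (Tp * Real.exp (-(dist x₀ y)^2 / (C₀ * T)) * Q y) with hf_def
  -- inner cover
  have hcov_in : ball x₀ r₁ ⊆ {x₀} ∪ ⋃ j, (ball x₀ (s j) \ ball x₀ (s (j+1))) := by
    intro y hy
    by_cases hyx : y = x₀
    · exact Or.inl (by simp [hyx])
    · have hd0 : 0 < dist x₀ y := dist_pos.mpr (fun h => hyx h.symm)
      have hex : ∃ j, s j ≤ dist x₀ y := by
        obtain ⟨j, hj⟩ := exists_pow_lt_of_lt_one (x := dist x₀ y / r₁) (y := (1/2:ℝ))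
          (by positivity) (by norm_num)
        refine ⟨j, le_of_lt ?_⟩
        have := mul_lt_mul_of_pos_left hj hr₁0
        calc s j = r₁ * (1/2:ℝ) ^ j := rfl
          _ < r₁ * (dist x₀ y / r₁) := this
          _ = dist x₀ y := by field_simp
      have hj₁ : s (Nat.find hex) ≤ dist x₀ y := Nat.find_spec hex
      have hj₁pos : Nat.find hex ≠ 0 := by
        intro h0
        rw [h0] at hj₁
        have hylt : dist x₀ y < r₁ := mem_ball'.mp hy
        have : s 0 = r₁ := by rw [hs_def]; simp
        rw [this] at hj₁
        linarith
      obtain ⟨j, hj⟩ := Nat.exists_eq_succ_of_ne_zero hj₁pos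
      refine Or.inr (Set.mem_iUnion.mpr ⟨j, ?_, ?_⟩)
      · have := Nat.find_min hex (m := j) (by omega)
        exact mem_ball'.mpr (not_le.mp this)
      · intro hmem
        have := mem_ball'.mp hmem
        rw [← Nat.succ_eq_add_one, ← hj] at this
        linarith
  -- outer cover
  have hcov_out : (ball x₀ r₁)ᶜ ⊆ ⋃ k, (ball x₀ (R (k+1)) \ ball x₀ (R k)) := by
    intro y hy
    have hd : r₁ ≤ dist x₀ y := not_lt.mp (fun h => hy (mem_ball'.mpr h))
    have hex : ∃ k, dist x₀ y < R (k+1) := by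
      obtain ⟨k, hk⟩ := pow_unbounded_of_one_lt (dist x₀ y / r₁) (y := (2:ℝ)) one_lt_two
      refine ⟨k, ?_⟩
      have := mul_lt_mul_of_pos_left hk hr₁0
      calc dist x₀ y = r₁ * (dist x₀ y / r₁) := by field_simp
        _ < r₁ * 2 ^ k := this
        _ ≤ r₁ * 2 ^ (k+1) := by
            apply mul_le_mul_of_nonneg_left (pow_le_pow_right₀ one_le_two (by omega)) hr₁0.le
    refine Set.mem_iUnion.mpr ⟨Nat.find hex, mem_ball'.mpr (Nat.find_spec hex), ?_⟩
    intro hmem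
    have hlt := mem_ball'.mp hmem
    rcases Nat.eq_zero_or_pos (Nat.find hex) with h0 | hpos
    · rw [h0] at hlt
      have : R 0 = r₁ := by rw [hR_def]; simp
      rw [this] at hlt
      linarith
    · have := Nat.find_min hex (m := Nat.find hex - 1) (by omega)
      have heq : Nat.find hex - 1 + 1 = Nat.find hex := by omega
      rw [heq] at this
      exact this hlt
  -- singleton estimate
  have h_single : ∫⁻ y in {x₀}, f y ∂μ ≤ ENNReal.ofReal (Tp * (L * T ^ (b/2))) := by
    set rmin : ℝ := min (Real.sqrt T) r₁ with hrmin_def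
    have hrmin0 : 0 < rmin := lt_min (Real.sqrt_pos.mpr hT0) hr₁0
    have hrminr₀ : rmin < r₀ := (min_le_right _ _).trans_lt hr₁r₀
    have hrminb : rmin ^ b ≤ T ^ (b/2) := by
      rw [← aux_sqrt_rpow hT0 b]
      exact Real.rpow_le_rpow hrmin0.le (min_le_left _ _) hb0.le
    calc ∫⁻ y in {x₀}, f y ∂μ
        ≤ ∫⁻ y in {x₀}, ENNReal.ofReal Tp * ENNReal.ofReal (Q y) ∂μ := by
          apply setLIntegral_mono' (measurableSet_singleton x₀)
          intro y hy
          rw [Set.mem_singleton_iff] at hy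
          subst hy
          rw [hf_def]
          simp only [dist_self]
          rw [← ENNReal.ofReal_mul hTp0]
          apply ENNReal.ofReal_le_ofReal
          rw [show -(0:ℝ)^2 / (C₀ * T) = 0 by norm_num, Real.exp_zero, mul_one]
      _ = ENNReal.ofReal Tp * ∫⁻ y in {x₀}, ENNReal.ofReal (Q y) ∂μ :=
          lintegral_const_mul' _ _ ENNReal.ofReal_ne_top
      _ ≤ ENNReal.ofReal Tp * ENNReal.ofReal (L * rmin ^ b) := by
          apply mul_le_mul_right ?_ _
          refine le_trans (lintegral_mono_set ?_) (hQ1 rmin hrmin0 hrminr₀)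
          simp [Set.singleton_subset_iff, mem_ball_self hrmin0]
      _ ≤ ENNReal.ofReal (Tp * (L * T ^ (b/2))) := by
          rw [← ENNReal.ofReal_mul hTp0]
          apply ENNReal.ofReal_le_ofReal
          apply mul_le_mul_of_nonneg_left ?_ hTp0
          apply mul_le_mul_of_nonneg_left hrminb hL.le
  -- annuli estimates (inner)
  have h_ann : ∀ j : ℕ, ∫⁻ y in (ball x₀ (s j) \ ball x₀ (s (j+1))), f y ∂μ
      ≤ ENNReal.ofReal (Tp * L * w j) := by
    intro j
    have hTpe : 0 ≤ Tp * Real.exp (-(s (j+1)) ^ 2 / (C₀ * T)) := by positivity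
    calc ∫⁻ y in (ball x₀ (s j) \ ball x₀ (s (j+1))), f y ∂μ
        ≤ ∫⁻ y in (ball x₀ (s j) \ ball x₀ (s (j+1))),
            ENNReal.ofReal (Tp * Real.exp (-(s (j+1)) ^ 2 / (C₀ * T)))
              * ENNReal.ofReal (Q y) ∂μ := by
          apply setLIntegral_mono' (measurableSet_ball.diff measurableSet_ball)
          intro y hy
          have hdist : s (j+1) ≤ dist x₀ y := not_lt.mp (fun h => hy.2 (mem_ball'.mpr h))
          have hexp : Real.exp (-(dist x₀ y) ^ 2 / (C₀ * T))
              ≤ Real.exp (-(s (j+1)) ^ 2 / (C₀ * T)) := by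
            apply Real.exp_le_exp.mpr
            apply div_le_div_of_nonneg_right ?_ (by positivity)
            have : (s (j+1))^2 ≤ (dist x₀ y)^2 := by nlinarith [hs_pos (j+1)]
            linarith
          rw [hf_def, ← ENNReal.ofReal_mul hTpe]
          apply ENNReal.ofReal_le_ofReal
          exact mul_le_mul_of_nonneg_right (mul_le_mul_of_nonneg_left hexp hTp0) (hQ0 y)
      _ = ENNReal.ofReal (Tp * Real.exp (-(s (j+1)) ^ 2 / (C₀ * T)))
            * ∫⁻ y in (ball x₀ (s j) \ ball x₀ (s (j+1))), ENNReal.ofReal (Q y) ∂μ :=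
          lintegral_const_mul' _ _ ENNReal.ofReal_ne_top
      _ ≤ ENNReal.ofReal (Tp * Real.exp (-(s (j+1)) ^ 2 / (C₀ * T)))
            * ENNReal.ofReal (L * s j ^ b) := by
          apply mul_le_mul_right ?_ _
          exact le_trans (lintegral_mono_set Set.diff_subset) (hQ1 (s j) (hs_pos j) (hs_lt j))
      _ = ENNReal.ofReal (Tp * L * w j) := by
          rw [← ENNReal.ofReal_mul hTpe]
          congr 1
          rw [hw_def]
          ring
  -- annuli estimates (outer)
  have h_ann_out : ∀ k : ℕ, ∫⁻ y in (ball x₀ (R (k+1)) \ ball x₀ (R k)), f y ∂μ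
      ≤ ENNReal.ofReal (v k) := by
    intro k
    have hTpe : 0 ≤ Tp * Real.exp (-(R k) ^ 2 / (C₀ * T)) := by positivity
    have hRk1 : r₀ ≤ R (k+1) := by
      have h2k : (1:ℝ) ≤ 2 ^ k := one_le_pow₀ one_le_two
      rw [hR_def]
      simp only []
      calc r₀ = r₁ * 2 := by rw [hr₁_def]; ring
        _ ≤ r₁ * 2 ^ (k+1) := by
            apply mul_le_mul_of_nonneg_left ?_ hr₁0.le
            calc (2:ℝ) = 2^1 := (pow_one 2).symm
              _ ≤ 2 ^ (k+1) := pow_le_pow_right₀ one_le_two (by omega)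
    calc ∫⁻ y in (ball x₀ (R (k+1)) \ ball x₀ (R k)), f y ∂μ
        ≤ ∫⁻ y in (ball x₀ (R (k+1)) \ ball x₀ (R k)),
            ENNReal.ofReal (Tp * Real.exp (-(R k) ^ 2 / (C₀ * T)))
              * ENNReal.ofReal (Q y) ∂μ := by
          apply setLIntegral_mono' (measurableSet_ball.diff measurableSet_ball)
          intro y hy
          have hdist : R k ≤ dist x₀ y := not_lt.mp (fun h => hy.2 (mem_ball'.mpr h))
          have hRk0 : 0 < R k := by rw [hR_def]; positivity
          have hexp : Real.exp (-(dist x₀ y) ^ 2 / (C₀ * T))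
              ≤ Real.exp (-(R k) ^ 2 / (C₀ * T)) := by
            apply Real.exp_le_exp.mpr
            apply div_le_div_of_nonneg_right ?_ (by positivity)
            have : (R k)^2 ≤ (dist x₀ y)^2 := by nlinarith
            linarith
          rw [hf_def, ← ENNReal.ofReal_mul hTpe]
          apply ENNReal.ofReal_le_ofReal
          apply mul_le_mul_of_nonneg_right ?_ (hQ0 y)
          exact mul_le_mul_of_nonneg_left hexp hTp0
      _ = ENNReal.ofReal (Tp * Real.exp (-(R k) ^ 2 / (C₀ * T)))
            * ∫⁻ y in (ball x₀ (R (k+1)) \ ball x₀ (R k)), ENNReal.ofReal (Q y) ∂μ :=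
          lintegral_const_mul' _ _ ENNReal.ofReal_ne_top
      _ ≤ ENNReal.ofReal (Tp * Real.exp (-(R k) ^ 2 / (C₀ * T)))
            * ENNReal.ofReal (C₁ * Real.exp (C₁ * (R (k+1)))) := by
          apply mul_le_mul_right ?_ _
          exact le_trans (lintegral_mono_set Set.diff_subset) (hQ2 (R (k+1)) hRk1)
      _ = ENNReal.ofReal (v k) := by
          rw [← ENNReal.ofReal_mul hTpe]
  -- summability facts
  have hw_sum : Summable w := inner_w_summable b C₀ r₁ T hb0 hC₀ hr₁0 hT0
  have hw_nonneg : ∀ j, 0 ≤ w j := fun j => by rw [hw_def]; positivity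
  have hv_sum : Summable v := outer_summable n C₀ C₁ r₁ T hC₀ hC₁ hr₁0 hT0 hT1
  have hv_nonneg : ∀ k, 0 ≤ v k := fun k => by rw [hv_def]; positivity
  have hmb : b + 2 ≤ 2 * (m:ℝ) := by
    rw [hb_def, hm_def]
    push_cast
    linarith
  -- inner total
  have h_inner : ∫⁻ y in ball x₀ r₁, f y ∂μ
      ≤ ENNReal.ofReal (Tp * (L * T ^ (b/2))) + ENNReal.ofReal (Tp * L * (G * T ^ (b/2))) := by
    calc ∫⁻ y in ball x₀ r₁, f y ∂μ
        ≤ ∫⁻ y in {x₀} ∪ ⋃ j, (ball x₀ (s j) \ ball x₀ (s (j+1))), f y ∂μ :=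
          lintegral_mono_set hcov_in
      _ ≤ ∫⁻ y in {x₀}, f y ∂μ
          + ∫⁻ y in ⋃ j, (ball x₀ (s j) \ ball x₀ (s (j+1))), f y ∂μ :=
          lintegral_union_le _ _ _
      _ ≤ ENNReal.ofReal (Tp * (L * T ^ (b/2)))
          + ∑' j, ∫⁻ y in (ball x₀ (s j) \ ball x₀ (s (j+1))), f y ∂μ :=
          add_le_add h_single (lintegral_iUnion_le _ _)
      _ ≤ ENNReal.ofReal (Tp * (L * T ^ (b/2))) + ∑' j, ENNReal.ofReal (Tp * L * w j) :=
          add_le_add_right (ENNReal.tsum_le_tsum h_ann) _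
      _ = ENNReal.ofReal (Tp * (L * T ^ (b/2))) + ENNReal.ofReal (∑' j, Tp * L * w j) := by
          rw [ENNReal.ofReal_tsum_of_nonneg (fun j => by positivity) (hw_sum.mul_left _)]
      _ ≤ ENNReal.ofReal (Tp * (L * T ^ (b/2))) + ENNReal.ofReal (Tp * L * (G * T ^ (b/2))) := by
          apply add_le_add_right
          apply ENNReal.ofReal_le_ofReal
          rw [tsum_mul_left]
          apply mul_le_mul_of_nonneg_left ?_ (by positivity)
          exact inner_sum_bound b C₀ r₁ T m hb0 hC₀ hr₁0 hT0 hmb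
  -- outer total
  have h_outer : ∫⁻ y in (ball x₀ r₁)ᶜ, f y ∂μ ≤ ENNReal.ofReal Cout := by
    calc ∫⁻ y in (ball x₀ r₁)ᶜ, f y ∂μ
        ≤ ∫⁻ y in ⋃ k, (ball x₀ (R (k+1)) \ ball x₀ (R k)), f y ∂μ :=
          lintegral_mono_set hcov_out
      _ ≤ ∑' k, ∫⁻ y in (ball x₀ (R (k+1)) \ ball x₀ (R k)), f y ∂μ :=
          lintegral_iUnion_le _ _
      _ ≤ ∑' k, ENNReal.ofReal (v k) := ENNReal.tsum_le_tsum h_ann_out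
      _ = ENNReal.ofReal (∑' k, v k) :=
          (ENNReal.ofReal_tsum_of_nonneg hv_nonneg hv_sum).symm
      _ ≤ ENNReal.ofReal Cout := by
          apply ENNReal.ofReal_le_ofReal
          rw [hCout_def]
          exact outer_sum_bound n C₀ C₁ r₁ T hC₀ hC₁ hr₁0 hT0 hT1
  -- final assembly
  have hTe1 : 1 ≤ T ^ (-(1 - a)/2) :=
    Real.one_le_rpow_of_pos_of_le_one_of_nonpos hT0 hT1 (by linarith)
  have hTpT : Tp * T ^ (b/2) = T ^ (-(1 - a)/2) := by
    rw [hTp_def, ← Real.rpow_add hT0]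
    congr 1
    rw [hb_def]
    ring
  calc ∫⁻ y, f y ∂μ
      = ∫⁻ y in ball x₀ r₁, f y ∂μ + ∫⁻ y in (ball x₀ r₁)ᶜ, f y ∂μ :=
        (lintegral_add_compl f measurableSet_ball).symm
    _ ≤ (ENNReal.ofReal (Tp * (L * T ^ (b/2))) + ENNReal.ofReal (Tp * L * (G * T ^ (b/2))))
        + ENNReal.ofReal Cout := add_le_add h_inner h_outer
    _ ≤ ENNReal.ofReal ((L * (1 + G) + Cout) * T ^ (-(1 - a)/2)) := by
        rw [← ENNReal.ofReal_add (by positivity) (by positivity),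
          ← ENNReal.ofReal_add (by positivity) (by positivity)]
        apply ENNReal.ofReal_le_ofReal
        have hC : Cout ≤ Cout * T ^ (-(1 - a)/2) :=
          le_mul_of_one_le_right hCout0.le hTe1
        have hE : Tp * (L * T ^ (b/2)) + Tp * L * (G * T ^ (b/2)) + Cout
            = (L * (1 + G)) * (Tp * T ^ (b/2)) + Cout := by ring
        rw [hE, hTpT]
        have hnn : 0 ≤ (L * (1 + G)) * T ^ (-(1 - a)/2) := by positivity
        linarith
end
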